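/- If E is a divisor over a normal variety X such that a^E_• is finitely generated in degree m, then the ideal a^E_m has all positive powers integrally closed and has exactly one Rees valuation, namely ord_E. -/

import Mathlib

/-- `x` is integral over the ideal `I`: it satisfies an equation of integral
dependence `x^n + a_1 x^{n-1} + ⋯ + a_n = 0` with `a_i ∈ I^i`. -/
def IsIntegralOverIdeal {R : Type*} [CommRing R] (I : Ideal R) (x : R) : Prop :=
  ∃ n : ℕ, 0 < n ∧ ∃ a : ℕ → R,
    (∀ i ∈ Finset.Icc 1 n, a i ∈ I ^ i) ∧
    x ^ n + ∑ i ∈ Finset.Icc 1 n, a i * x ^ (n - i) = 0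

/-- **Lemma `lemrees`.** Let `E` be a divisor over a normal variety
`X`, with valuation `v = ord_E` and graded sequence `a^E_m = {f : v(f) ≥ m}`.
If `a^E_•` is finitely generated in degree `m` (i.e. `a^E_{mn} = (a^E_m)^n`), then
every positive power of `a^E_m` is integrally closed, and `a^E_m` has exactly one
Rees valuation, namely `ord_E`: the integral closure of `(a^E_m)^n` is cut out by
the single valuation `v` via `{f : v(f) ≥ mn}`. -/
theorem powers_integrally_closed_and_unique_rees_valuation
    {R : Type*} [CommRing R]
    (v : R → ℕ∞)
    (hv0 : v 0 = ⊤)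
    (hv1 : v 1 = 0)
    (hvmul : ∀ x y : R, v (x * y) = v x + v y)
    (hvadd : ∀ x y : R, min (v x) (v y) ≤ v (x + y))
    (aE : ℕ → Ideal R)
    (hmem : ∀ (l : ℕ) (f : R), f ∈ aE l ↔ (l : ℕ∞) ≤ v f)
    (m : ℕ) (hm : 0 < m)
    (hfg : ∀ n : ℕ, aE (m * n) = (aE m) ^ n) :
    (∀ n : ℕ, 0 < n → ∀ x : R, IsIntegralOverIdeal ((aE m) ^ n) x → x ∈ (aE m) ^ n) ∧
    (∀ n : ℕ, 0 < n → ∀ x : R,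
      IsIntegralOverIdeal ((aE m) ^ n) x ↔ ((m * n : ℕ) : ℕ∞) ≤ v x) := by
  -- v(-1) = 0
  have hvneg1 : v (-1) = 0 := by
    have h := hvmul (-1) (-1)
    rw [neg_mul_neg, one_mul, hv1] at h
    rcases (add_eq_zero.mp h.symm) with ⟨h1, _⟩
    exact h1
  have hvneg : ∀ x : R, v (-x) = v x := by
    intro x
    have : (-x) = (-1) * x := by ring
    rw [this, hvmul, hvneg1, zero_add]
  -- power of elements with finite valuation
  have hvpow : ∀ (x : R) (c : ℕ), v x = (c : ℕ∞) → ∀ k : ℕ, v (x ^ k) = ((k * c : ℕ) : ℕ∞) := by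
    intro x c hc k
    induction k with
    | zero => simpa using hv1
    | succ k ih =>
      rw [pow_succ, hvmul, ih, hc]
      push_cast
      ring
  -- valuation of a sum is at least the min of the terms
  have hvsum : ∀ (s : Finset ℕ) (f : ℕ → R) (t : ℕ∞),
      (∀ i ∈ s, t ≤ v (f i)) → t ≤ v (∑ i ∈ s, f i) := by
    intro s f t h
    induction s using Finset.cons_induction with
    | empty => simp [hv0]
    | cons a s ha ih =>
      rw [Finset.sum_cons]
      refine le_trans (le_min (h a (Finset.mem_cons_self a s)) ?_) (hvadd _ _)
      exact ih fun i hi => h i (Finset.mem_cons_of_mem hi)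
  -- key direction: integral over (aE m)^n implies v x ≥ m*n
  have key : ∀ n : ℕ, ∀ x : R, IsIntegralOverIdeal ((aE m) ^ n) x → ((m * n : ℕ) : ℕ∞) ≤ v x := by
    intro n x ⟨N, hN, a, ha, heq⟩
    cases hvx : v x with
    | top => exact le_top
    | coe c =>
      by_contra hlt
      push_neg at hlt
      have hc : c < m * n := by exact_mod_cast hlt
      -- each term in the sum has valuation ≥ N*c + 1
      have hterm : ∀ i ∈ Finset.Icc 1 N,
          ((N * c + 1 : ℕ) : ℕ∞) ≤ v (a i * x ^ (N - i)) := by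
        intro i hi
        rw [Finset.mem_Icc] at hi
        obtain ⟨hi1, hiN⟩ := hi
        have hai : a i ∈ aE (m * (n * i)) := by
          rw [hfg, pow_mul]
          exact ha i (Finset.mem_Icc.mpr ⟨hi1, hiN⟩)
        have hvai : ((m * (n * i) : ℕ) : ℕ∞) ≤ v (a i) := (hmem _ _).mp hai
        rw [hvmul, hvpow x c hvx (N - i)]
        calc ((N * c + 1 : ℕ) : ℕ∞)
            ≤ ((m * (n * i) + (N - i) * c : ℕ) : ℕ∞) := by
              have : N * c + 1 ≤ m * (n * i) + (N - i) * c := by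
                have hN' : N * c = i * c + (N - i) * c := by
                  rw [← Nat.add_mul]; rw [Nat.add_sub_cancel' hiN]
                have : i * c + 1 ≤ m * (n * i) := by
                  calc i * c + 1 ≤ i * c + i := by omega
                    _ = i * (c + 1) := by ring
                    _ ≤ i * (m * n) := Nat.mul_le_mul_left _ (by omega)
                    _ = m * (n * i) := by ring
                omega
              exact_mod_cast this
          _ ≤ v (a i) + ((N - i) * c : ℕ) := by
              push_cast
              exact add_le_add (by exact_mod_cast hvai) le_rfl
      have hsum : ((N * c + 1 : ℕ) : ℕ∞) ≤ v (∑ i ∈ Finset.Icc 1 N, a i * x ^ (N - i)) :=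
        hvsum _ _ _ hterm
      have hxN : v (x ^ N) = ((N * c : ℕ) : ℕ∞) := hvpow x c hvx N
      have hSeq : (∑ i ∈ Finset.Icc 1 N, a i * x ^ (N - i)) = -(x ^ N) := by
        linear_combination heq
      rw [hSeq, hvneg, hxN] at hsum
      exact absurd (by exact_mod_cast hsum) (by omega)
  refine ⟨?_, ?_⟩
  · intro n _ x hx
    rw [← hfg, hmem]
    exact key n x hx
  · intro n _ x
    constructor
    · exact key n x
    · intro hx
      refine ⟨1, one_pos, fun i => if i = 1 then -x else 0, ?_, ?_⟩
      · intro i hi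
        rw [Finset.mem_Icc] at hi
        have : i = 1 := by omega
        subst this
        simp only [if_pos rfl, pow_one]
        exact neg_mem (by rw [← hfg, hmem]; exact hx)
      · simp
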